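/- For all real numbers s < t with t − s < 2π, there exists a piecewise Möbius vector field f such that f(θ) ≥ 0 for all θ ∈ ℝ, f(θ) = 0 for every θ whose residue modulo 2π lies outside the open interval (s, t), and (1/2π)·∫₀^{2π} f(θ) dθ = 1. -/

import Mathlib

/-- A piecewise Möbius vector field: a 2π-periodic everywhere differentiable
function which is, on each of finitely many arcs covering the circle, of the
form `θ ↦ α + β cos θ + γ sin θ`. -/
def IsPiecewiseMobius (f : ℝ → ℝ) : Prop :=
  Function.Periodic f (2 * Real.pi) ∧ (∀ x : ℝ, DifferentiableAt ℝ f x) ∧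
    ∃ (N : ℕ) (θ α β γ : ℕ → ℝ), 1 ≤ N ∧ (∀ k < N, θ k < θ (k + 1)) ∧
      θ N = θ 0 + 2 * Real.pi ∧
      ∀ k, 1 ≤ k → k ≤ N → ∀ x ∈ Set.Icc (θ (k - 1)) (θ k),
        f x = α k + β k * Real.cos x + γ k * Real.sin x

open Real Set Filter Topology

namespace PMBump

noncomputable def g (a δ c : ℝ) : ℝ :=
  if c ≤ Real.cos (2*δ) then 0
  else if c ≤ Real.cos δ then
    a * (1 - Real.cos (2*δ) * c - Real.sin (2*δ) * Real.sqrt (1 - c^2))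
  else a * (1 - 2 * Real.cos δ + c)

noncomputable def f (a δ m x : ℝ) : ℝ := g a δ (Real.cos (x - m))

lemma hcoslt {δ : ℝ} (hδ : 0 < δ) (hδ4 : δ < π/4) : Real.cos (2*δ) < Real.cos δ :=
  Real.cos_lt_cos_of_nonneg_of_le_pi hδ.le (by linarith [pi_pos]) (by linarith)

lemma hcos2pos {δ : ℝ} (hδ : 0 < δ) (hδ4 : δ < π/4) : 0 < Real.cos (2*δ) :=
  Real.cos_pos_of_mem_Ioo ⟨by linarith [pi_pos], by linarith⟩

lemma sqrt_one_sub_cos_sq {u : ℝ} (h0 : 0 ≤ u) (hπ : u ≤ π) :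
    Real.sqrt (1 - Real.cos u ^ 2) = Real.sin u := by
  rw [← Real.sin_sq, Real.sqrt_sq (Real.sin_nonneg_of_nonneg_of_le_pi h0 hπ)]

lemma g_cos_of_ge {a δ : ℝ} (hδ : 0 < δ) {u : ℝ} (hu : 2*δ ≤ u) (huπ : u ≤ π) :
    g a δ (Real.cos u) = 0 := by
  rw [g, if_pos (Real.cos_le_cos_of_nonneg_of_le_pi (by linarith) huπ hu)]

lemma g_cos_of_mid {a δ : ℝ} (hδ : 0 < δ) (hδ4 : δ < π/4) {u : ℝ} (hu1 : δ ≤ u) (hu2 : u ≤ 2*δ) :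
    g a δ (Real.cos u) = a * (1 - Real.cos (2*δ - u)) := by
  have hπ2 : (2:ℝ)*δ ≤ π := by linarith [pi_pos]
  have huπ : u ≤ π := by linarith
  by_cases h1 : Real.cos u ≤ Real.cos (2*δ)
  · have h1' : Real.cos (2*δ) ≤ Real.cos u :=
      Real.cos_le_cos_of_nonneg_of_le_pi (by linarith) hπ2 hu2
    have : u = 2*δ := Real.injOn_cos ⟨by linarith, huπ⟩ ⟨by linarith, hπ2⟩ (le_antisymm h1 h1')
    rw [g, if_pos h1, this]; simp
  · have h2 : Real.cos u ≤ Real.cos δ :=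
      Real.cos_le_cos_of_nonneg_of_le_pi hδ.le huπ hu1
    rw [g, if_neg h1, if_pos h2, sqrt_one_sub_cos_sq (by linarith) huπ, Real.cos_sub]
    ring

lemma g_cos_of_lo {a δ : ℝ} (hδ : 0 < δ) (hδ4 : δ < π/4) {u : ℝ} (hu0 : 0 ≤ u) (hu : u ≤ δ) :
    g a δ (Real.cos u) = a * (1 - 2 * Real.cos δ + Real.cos u) := by
  have hπ2 : (2:ℝ)*δ ≤ π := by linarith [pi_pos]
  have huπ : u ≤ π := by linarith
  have h1 : ¬ Real.cos u ≤ Real.cos (2*δ) := by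
    push_neg
    calc Real.cos (2*δ) < Real.cos δ := hcoslt hδ hδ4
    _ ≤ Real.cos u := Real.cos_le_cos_of_nonneg_of_le_pi hu0 (by linarith) hu
  by_cases h2 : Real.cos u ≤ Real.cos δ
  · have h2' : Real.cos δ ≤ Real.cos u := Real.cos_le_cos_of_nonneg_of_le_pi hu0 (by linarith) hu
    have huδ : u = δ := Real.injOn_cos ⟨hu0, huπ⟩ ⟨hδ.le, by linarith⟩ (le_antisymm h2 h2')
    rw [g, if_neg h1, if_pos h2, huδ, sqrt_one_sub_cos_sq hδ.le (by linarith)]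
    have h4 : Real.cos (2*δ) * Real.cos δ + Real.sin (2*δ) * Real.sin δ = Real.cos δ := by
      rw [← Real.cos_sub]; congr 1; ring
    linear_combination (-a) * h4
  · rw [g, if_neg h1, if_neg h2]

lemma g_nonneg {a δ : ℝ} (hδ : 0 < δ) (hδ4 : δ < π/4) (ha : 0 ≤ a) {c : ℝ} (hc : c ≤ 1) :
    0 ≤ g a δ c := by
  rw [g]
  split_ifs with h1 h2
  · exact le_refl _
  · push_neg at h1
    have hc1 : -1 ≤ c := le_of_lt (lt_of_le_of_lt (by linarith [Real.neg_one_le_cos (2*δ)]) h1)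
    have key : Real.cos (2*δ) * c + Real.sin (2*δ) * Real.sqrt (1 - c^2)
        = Real.cos (2*δ - Real.arccos c) := by
      rw [Real.cos_sub, Real.cos_arccos hc1 hc, Real.sin_arccos]
    have := Real.cos_le_one (2*δ - Real.arccos c)
    nlinarith
  · push_neg at h2
    have := Real.cos_le_one δ
    nlinarith


noncomputable def φ (a δ c : ℝ) : ℝ :=
  a * (1 - Real.cos (2*δ) * c - Real.sin (2*δ) * Real.sqrt (1 - c^2))

lemma hasDerivAt_φ (a δ : ℝ) {c : ℝ} (hc : 0 < 1 - c^2) :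
    HasDerivAt (φ a δ) (a * (-(Real.cos (2*δ)) + Real.sin (2*δ) * c / Real.sqrt (1 - c^2))) c := by
  have h1 : HasDerivAt (fun x : ℝ => 1 - x^2) (-(2*c)) c := by
    simpa using (hasDerivAt_pow 2 c).const_sub 1
  have h2 := h1.sqrt hc.ne'
  have h3 : HasDerivAt (fun x : ℝ => a * (1 - Real.cos (2*δ) * x - Real.sin (2*δ) * Real.sqrt (1 - x^2)))
      (a * (0 - Real.cos (2*δ) * 1 - Real.sin (2*δ) * (-(2*c) / (2 * Real.sqrt (1 - c^2))))) c := by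
    exact (((hasDerivAt_const c (1:ℝ)).sub ((hasDerivAt_id c).const_mul (Real.cos (2*δ)))).sub
      (h2.const_mul (Real.sin (2*δ)))).const_mul a
  have hs : Real.sqrt (1 - c^2) ≠ 0 := (Real.sqrt_pos.2 hc).ne'
  convert h3 using 1
  · rfl
  field_simp
  ring


lemma hcos1 (hδ : 0 < δ) (hδ4 : δ < π/4) : Real.cos δ < 1 := by
  have := Real.cos_lt_cos_of_nonneg_of_le_pi (le_refl (0:ℝ)) (by linarith [pi_pos] : δ ≤ π) hδ
  simpa using this

lemma sqrt2δ (hδ : 0 < δ) (hδ4 : δ < π/4) :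
    Real.sqrt (1 - Real.cos (2*δ)^2) = Real.sin (2*δ) := by
  rw [← Real.sin_sq, Real.sqrt_sq (Real.sin_nonneg_of_nonneg_of_le_pi (by linarith)
    (by linarith [pi_pos]))]

lemma sqrtδ (hδ : 0 < δ) (hδ4 : δ < π/4) :
    Real.sqrt (1 - Real.cos δ^2) = Real.sin δ := by
  rw [← Real.sin_sq, Real.sqrt_sq (Real.sin_nonneg_of_nonneg_of_le_pi (by linarith)
    (by linarith [pi_pos]))]

lemma gval_left (hδ : 0 < δ) (hδ4 : δ < π/4) : g a δ (Real.cos (2*δ)) = 0 := by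
  rw [g, if_pos le_rfl]

lemma φval_left (hδ : 0 < δ) (hδ4 : δ < π/4) : φ a δ (Real.cos (2*δ)) = 0 := by
  rw [φ, sqrt2δ hδ hδ4]
  linear_combination (-a) * Real.sin_sq_add_cos_sq (2*δ)

lemma g_eq_φ_of (hδ : 0 < δ) (hδ4 : δ < π/4) {c : ℝ}
    (h1 : Real.cos (2*δ) ≤ c) (h2 : c ≤ Real.cos δ) : g a δ c = φ a δ c := by
  rcases eq_or_lt_of_le h1 with h | h
  · rw [← h, gval_left hδ hδ4, φval_left hδ hδ4]
  · rw [g, if_neg (not_le.2 h), if_pos h2, φ]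

lemma hasDerivAt_g_left (hδ : 0 < δ) (hδ4 : δ < π/4) :
    HasDerivAt (g a δ) 0 (Real.cos (2*δ)) := by
  set c0 := Real.cos (2*δ) with hc0
  have hsin : 0 < Real.sin (2*δ) := Real.sin_pos_of_pos_of_lt_pi (by linarith) (by linarith [pi_pos])
  have hcsq : 0 < 1 - c0^2 := by nlinarith [Real.sin_sq_add_cos_sq (2*δ)]
  have hφ : HasDerivAt (φ a δ) 0 c0 := by
    have h := hasDerivAt_φ a δ hcsq
    convert h using 1
    rw [hc0, sqrt2δ hδ hδ4]
    field_simp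
    ring
  have hleft : HasDerivWithinAt (g a δ) 0 (Iic c0) c0 := by
    refine (hasDerivWithinAt_const c0 _ 0).congr (fun c hc => ?_) ?_
    · rw [g, if_pos (mem_Iic.1 hc)]
    · rw [g, if_pos le_rfl]
  have hright : HasDerivWithinAt (g a δ) 0 (Ici c0) c0 := by
    refine hφ.hasDerivWithinAt.congr_of_eventuallyEq ?_ (gval_left hδ hδ4 |>.trans (φval_left hδ hδ4).symm)
    have h1 : ∀ᶠ c in 𝓝[Ici c0] c0, c < Real.cos δ :=
      eventually_nhdsWithin_of_eventually_nhds (gt_mem_nhds (hcoslt hδ hδ4))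
    filter_upwards [h1, self_mem_nhdsWithin] with c hcδ hcc0
    exact g_eq_φ_of hδ hδ4 (mem_Ici.1 hcc0) hcδ.le
  have := hleft.union hright
  rw [Iic_union_Ici] at this
  exact this.hasDerivAt univ_mem

lemma hasDerivAt_g_right (hδ : 0 < δ) (hδ4 : δ < π/4) :
    HasDerivAt (g a δ) a (Real.cos δ) := by
  set c1 := Real.cos δ with hc1
  have hsin : 0 < Real.sin δ := Real.sin_pos_of_pos_of_lt_pi hδ (by linarith [pi_pos])
  have hcsq : 0 < 1 - c1^2 := by nlinarith [Real.sin_sq_add_cos_sq δ]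
  have hsindiff : Real.sin (2*δ) * Real.cos δ - Real.cos (2*δ) * Real.sin δ = Real.sin δ := by
    rw [← Real.sin_sub]; congr 1; ring
  have hφ : HasDerivAt (φ a δ) a c1 := by
    have h := hasDerivAt_φ a δ hcsq
    convert h using 1
    rw [hc1, sqrtδ hδ hδ4]
    have h5 : -(Real.cos (2*δ)) + Real.sin (2*δ) * Real.cos δ / Real.sin δ = 1 := by
      field_simp
      linear_combination hsindiff
    rw [h5, mul_one]
  have hleft : HasDerivWithinAt (g a δ) a (Iic c1) c1 := by
    refine hφ.hasDerivWithinAt.congr_of_eventuallyEq ?_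
      (g_eq_φ_of hδ hδ4 (hcoslt hδ hδ4).le le_rfl)
    have h1 : ∀ᶠ c in 𝓝[Iic c1] c1, Real.cos (2*δ) < c :=
      eventually_nhdsWithin_of_eventually_nhds (lt_mem_nhds (hcoslt hδ hδ4))
    filter_upwards [h1, self_mem_nhdsWithin] with c h2 h3
    exact g_eq_φ_of hδ hδ4 h2.le (mem_Iic.1 h3)
  have hψ : HasDerivAt (fun c => a * (1 - 2 * Real.cos δ + c)) a c1 := by
    simpa using ((hasDerivAt_id c1).const_add (1 - 2*Real.cos δ)).const_mul a
  have hψval : g a δ c1 = a * (1 - 2 * Real.cos δ + c1) := by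
    rw [g_eq_φ_of hδ hδ4 (hcoslt hδ hδ4).le le_rfl, φ, hc1, sqrtδ hδ hδ4]
    have h4 : Real.cos (2*δ) * Real.cos δ + Real.sin (2*δ) * Real.sin δ = Real.cos δ := by
      rw [← Real.cos_sub]; congr 1; ring
    linear_combination (-a) * h4
  have hright : HasDerivWithinAt (g a δ) a (Ici c1) c1 := by
    refine hψ.hasDerivWithinAt.congr (fun c hc => ?_) hψval
    rcases eq_or_lt_of_le (mem_Ici.1 hc) with h | h
    · rw [← h, hψval]
    · rw [g, if_neg (not_le.2 ((hcoslt hδ hδ4).trans h)), if_neg (not_le.2 h)]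
  have := hleft.union hright
  rw [Iic_union_Ici] at this
  exact this.hasDerivAt univ_mem

lemma g_differentiable (hδ : 0 < δ) (hδ4 : δ < π/4) (c : ℝ) :
    DifferentiableAt ℝ (g a δ) c := by
  rcases lt_trichotomy c (Real.cos (2*δ)) with h | h | h
  · refine (differentiableAt_const (0:ℝ)).congr_of_eventuallyEq ?_
    filter_upwards [gt_mem_nhds h] with x hx
    rw [g, if_pos hx.le]
  · rw [h]; exact (hasDerivAt_g_left hδ hδ4).differentiableAt
  · rcases lt_trichotomy c (Real.cos δ) with h2 | h2 | h2
    · have hcsq : 0 < 1 - c^2 := by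
        have := hcos2pos hδ hδ4
        have := hcos1 hδ hδ4
        nlinarith
      refine ((hasDerivAt_φ a δ hcsq).differentiableAt).congr_of_eventuallyEq ?_
      filter_upwards [lt_mem_nhds h, gt_mem_nhds h2] with x hx1 hx2
      exact g_eq_φ_of hδ hδ4 hx1.le hx2.le
    · rw [h2]; exact (hasDerivAt_g_right hδ hδ4).differentiableAt
    · refine (((differentiableAt_fun_id).const_add (1 - 2*Real.cos δ)).const_mul a).congr_of_eventuallyEq ?_
      filter_upwards [lt_mem_nhds h2] with x hx
      rw [g, if_neg (not_le.2 ((hcoslt hδ hδ4).trans hx)), if_neg (not_le.2 hx)]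


variable {a δ m : ℝ}

lemma f_periodic : Function.Periodic (f a δ m) (2*π) := by
  intro x
  simp only [f]
  congr 1
  rw [show x + 2*π - m = (x - m) + 2*π by ring, Real.cos_add_two_pi]

lemma f_diff (hδ : 0 < δ) (hδ4 : δ < π/4) (x : ℝ) : DifferentiableAt ℝ (f a δ m) x := by
  have h1 : DifferentiableAt ℝ (fun x : ℝ => Real.cos (x - m)) x :=
    Real.differentiable_cos.differentiableAt.comp x (differentiableAt_id.sub (differentiableAt_const m))
  exact (g_differentiable hδ hδ4 _).comp x h1

lemma f_cont (hδ : 0 < δ) (hδ4 : δ < π/4) : Continuous (f a δ m) :=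
  continuous_iff_continuousAt.2 fun x => (f_diff hδ hδ4 x).continuousAt

lemma f_nonneg (hδ : 0 < δ) (hδ4 : δ < π/4) (ha : 0 ≤ a) (x : ℝ) : 0 ≤ f a δ m x :=
  g_nonneg hδ hδ4 ha (Real.cos_le_one _)

lemma f_eq_zero (hδ : 0 < δ) (hδ4 : δ < π/4) {x : ℝ} (h1 : 2*δ ≤ |x - m|)
    (h2 : |x - m| ≤ 2*π - 2*δ) : f a δ m x = 0 := by
  rw [f, ← Real.cos_abs]
  rcases le_or_gt |x - m| π with h | h
  · exact g_cos_of_ge hδ h1 h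
  · rw [show Real.cos |x - m| = Real.cos (2*π - |x - m|) by
      rw [show 2*π - |x - m| = -(|x - m| - 2*π) by ring, Real.cos_neg, Real.cos_sub_two_pi]]
    exact g_cos_of_ge hδ (by linarith) (by linarith)

lemma f_eq_left (hδ : 0 < δ) (hδ4 : δ < π/4) {x : ℝ} (h1 : m - 2*δ ≤ x) (h2 : x ≤ m - δ) :
    f a δ m x = a * (1 - Real.cos (x - (m - 2*δ))) := by
  rw [f, show x - m = -(m - x) by ring, Real.cos_neg,
    g_cos_of_mid hδ hδ4 (by linarith) (by linarith)]
  congr 2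
  ring

lemma f_eq_mid (hδ : 0 < δ) (hδ4 : δ < π/4) {x : ℝ} (h1 : m - δ ≤ x) (h2 : x ≤ m + δ) :
    f a δ m x = a * (1 - 2 * Real.cos δ + Real.cos (x - m)) := by
  rw [f, ← Real.cos_abs,
    g_cos_of_lo hδ hδ4 (abs_nonneg _) (abs_le.2 ⟨by linarith, by linarith⟩), Real.cos_abs]

lemma f_eq_right (hδ : 0 < δ) (hδ4 : δ < π/4) {x : ℝ} (h1 : m + δ ≤ x) (h2 : x ≤ m + 2*δ) :
    f a δ m x = a * (1 - Real.cos (x - (m + 2*δ))) := by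
  rw [f, g_cos_of_mid hδ hδ4 (by linarith) (by linarith),
    show 2*δ - (x - m) = -(x - (m + 2*δ)) by ring, Real.cos_neg]

lemma int_one_sub_cos (b u v : ℝ) :
    ∫ y in u..v, b * (1 - Real.cos y) = b * ((v - u) - (Real.sin v - Real.sin u)) := by
  rw [intervalIntegral.integral_const_mul,
    intervalIntegral.integral_sub intervalIntegrable_const
      (Real.continuous_cos.intervalIntegrable _ _),
    intervalIntegral.integral_const, integral_cos]
  simp [smul_eq_mul]

lemma int_mid_fun (b c u v : ℝ) :
    ∫ y in u..v, b * (c + Real.cos y) = b * (c * (v - u) + (Real.sin v - Real.sin u)) := by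
  rw [intervalIntegral.integral_const_mul,
    intervalIntegral.integral_add intervalIntegrable_const
      (Real.continuous_cos.intervalIntegrable _ _),
    intervalIntegral.integral_const, integral_cos]
  simp only [smul_eq_mul]
  ring

lemma f_integral (hδ : 0 < δ) (hδ4 : δ < π/4) :
    ∫ x in (m + 2*δ - 2*π)..(m + 2*δ), f a δ m x = a * (4*δ*(1 - Real.cos δ)) := by
  have hπ := pi_pos
  have hInt : ∀ u v : ℝ, IntervalIntegrable (f a δ m) MeasureTheory.volume u v :=
    fun u v => (f_cont hδ hδ4).intervalIntegrable u v
  have e3 := intervalIntegral.integral_add_adjacent_intervals (a := m - δ) (b := m + δ)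
    (c := m + 2*δ) (hInt _ _) (hInt _ _)
  have e2 := intervalIntegral.integral_add_adjacent_intervals (a := m - 2*δ) (b := m - δ)
    (c := m + 2*δ) (hInt _ _) (hInt _ _)
  have e1 := intervalIntegral.integral_add_adjacent_intervals (a := m + 2*δ - 2*π)
    (b := m - 2*δ) (c := m + 2*δ) (hInt _ _) (hInt _ _)
  rw [← e1, ← e2, ← e3]
  have h01 : ∫ x in (m + 2*δ - 2*π)..(m - 2*δ), f a δ m x = 0 := by
    rw [intervalIntegral.integral_congr (g := fun _ => (0:ℝ)) ?_, intervalIntegral.integral_const,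
      smul_zero]
    intro x hx
    rw [uIcc_of_le (by linarith)] at hx
    obtain ⟨hx1, hx2⟩ := hx
    have habs : |x - m| = m - x := by rw [abs_of_nonpos (by linarith)]; ring
    exact f_eq_zero hδ hδ4 (by rw [habs]; linarith) (by rw [habs]; linarith)
  have h12 : ∫ x in (m - 2*δ)..(m - δ), f a δ m x = a * (δ - Real.sin δ) := by
    rw [intervalIntegral.integral_congr (g := fun x => a * (1 - Real.cos (x - (m - 2*δ)))) ?_]
    · rw [intervalIntegral.integral_comp_sub_right (fun y => a * (1 - Real.cos y)) (m - 2*δ),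
        show m - 2*δ - (m - 2*δ) = 0 by ring, show m - δ - (m - 2*δ) = δ by ring,
        int_one_sub_cos]
      simp
    · intro x hx
      rw [uIcc_of_le (by linarith)] at hx
      exact f_eq_left hδ hδ4 hx.1 hx.2
  have h23 : ∫ x in (m - δ)..(m + δ), f a δ m x
      = a * ((1 - 2*Real.cos δ) * (2*δ) + 2 * Real.sin δ) := by
    rw [intervalIntegral.integral_congr
      (g := fun x => a * ((1 - 2*Real.cos δ) + Real.cos (x - m))) ?_]
    · rw [intervalIntegral.integral_comp_sub_right
        (fun y => a * ((1 - 2*Real.cos δ) + Real.cos y)) m,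
        show m - δ - m = -δ by ring, show m + δ - m = δ by ring, int_mid_fun]
      rw [Real.sin_neg]
      ring
    · intro x hx
      rw [uIcc_of_le (by linarith)] at hx
      rw [f_eq_mid hδ hδ4 hx.1 hx.2]
  have h34 : ∫ x in (m + δ)..(m + 2*δ), f a δ m x = a * (δ - Real.sin δ) := by
    rw [intervalIntegral.integral_congr (g := fun x => a * (1 - Real.cos (x - (m + 2*δ)))) ?_]
    · rw [intervalIntegral.integral_comp_sub_right (fun y => a * (1 - Real.cos y)) (m + 2*δ),
        show m + δ - (m + 2*δ) = -δ by ring, show m + 2*δ - (m + 2*δ) = 0 by ring,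
        int_one_sub_cos]
      rw [Real.sin_neg]
      simp
    · intro x hx
      rw [uIcc_of_le (by linarith)] at hx
      exact f_eq_right hδ hδ4 hx.1 hx.2
  rw [h01, h12, h23, h34]
  ring


end PMBump

/-- Existence of nonnegative piecewise Möbius "bump" vector fields of unit
mean, localized in any prescribed open arc of the circle. -/
theorem piecewise_mobius_bump_exists (s t : ℝ) (hst : s < t)
    (hlen : t - s < 2 * Real.pi) :
    ∃ f : ℝ → ℝ, IsPiecewiseMobius f ∧ (∀ x : ℝ, 0 ≤ f x) ∧
      (∀ x : ℝ, (x : AddCircle (2 * Real.pi)) ∉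
        (fun y : ℝ => (y : AddCircle (2 * Real.pi))) '' Set.Ioo s t → f x = 0) ∧
      (1 / (2 * Real.pi)) * ∫ x in (0 : ℝ)..(2 * Real.pi), f x = 1 := by
  have hπ := Real.pi_pos
  set δ : ℝ := (t - s)/8 with hδdef
  have hδ : 0 < δ := by rw [hδdef]; linarith
  have hδ4 : δ < π/4 := by rw [hδdef]; linarith
  set m : ℝ := (s + t)/2 with hmdef
  have hs4 : s = m - 4*δ := by rw [hmdef, hδdef]; ring
  have ht4 : t = m + 4*δ := by rw [hmdef, hδdef]; ring
  have hcδ : Real.cos δ < 1 := PMBump.hcos1 hδ hδ4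
  set a : ℝ := π / (2*δ*(1 - Real.cos δ)) with hadef
  have ha : 0 < a := by
    apply div_pos hπ
    have : 0 < 1 - Real.cos δ := by linarith
    positivity
  refine ⟨PMBump.f a δ m, ⟨PMBump.f_periodic, fun x => PMBump.f_diff hδ hδ4 x, ?_⟩,
    fun x => PMBump.f_nonneg hδ hδ4 ha.le x, ?_, ?_⟩
  · -- piecewise structure
    refine ⟨4,
      (fun k => if k = 0 then m + 2*δ - 2*π else if k = 1 then m - 2*δ
        else if k = 2 then m - δ else if k = 3 then m + δ else m + 2*δ),
      (fun k => if k = 2 then a else if k = 3 then a*(1 - 2*Real.cos δ)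
        else if k = 4 then a else 0),
      (fun k => if k = 2 then -(a * Real.cos (m - 2*δ)) else if k = 3 then a * Real.cos m
        else if k = 4 then -(a * Real.cos (m + 2*δ)) else 0),
      (fun k => if k = 2 then -(a * Real.sin (m - 2*δ)) else if k = 3 then a * Real.sin m
        else if k = 4 then -(a * Real.sin (m + 2*δ)) else 0),
      by norm_num, ?_, by norm_num, ?_⟩
    · intro k hk
      interval_cases k <;> norm_num <;> linarith
    · intro k hk1 hk4 x hx
      interval_cases k
      · norm_num at hx ⊢
        obtain ⟨hx1, hx2⟩ := hx
        have habs : |x - m| = m - x := by rw [abs_of_nonpos (by linarith)]; ring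
        exact PMBump.f_eq_zero hδ hδ4 (by rw [habs]; linarith) (by rw [habs]; linarith)
      · norm_num at hx ⊢
        rw [PMBump.f_eq_left hδ hδ4 (by linarith [hx.1]) (by linarith [hx.2]), Real.cos_sub]
        ring
      · norm_num at hx ⊢
        rw [PMBump.f_eq_mid hδ hδ4 (by linarith [hx.1]) (by linarith [hx.2]), Real.cos_sub]
        ring
      · norm_num at hx ⊢
        rw [PMBump.f_eq_right hδ hδ4 (by linarith [hx.1]) (by linarith [hx.2]), Real.cos_sub]
        ring
  · -- vanishing outside the arc
    intro x hx
    by_contra hfx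
    apply hx
    have hc : Real.cos (2*δ) < Real.cos (x - m) := by
      by_contra h
      push_neg at h
      exact hfx (by rw [PMBump.f, PMBump.g, if_pos h])
    set k : ℤ := round ((x - m) / (2*π)) with hk
    have h1 : |x - m - 2*π*k| ≤ π := by
      have h2 := abs_sub_round ((x - m)/(2*π))
      have h3 : x - m - 2*π*k = 2*π * ((x - m)/(2*π) - k) := by field_simp
      rw [h3, abs_mul, abs_of_pos (by linarith : (0:ℝ) < 2*π)]
      nlinarith
    have h4 : Real.cos (x - m - 2*π*k) = Real.cos (x - m) := by
      rw [show x - m - 2*π*k = x - m - k*(2*π) by ring]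
      exact Real.cos_sub_int_mul_two_pi _ _
    have h5 : |x - m - 2*π*k| < 2*δ := by
      by_contra h
      push_neg at h
      have h6 := Real.cos_le_cos_of_nonneg_of_le_pi (by linarith : (0:ℝ) ≤ 2*δ) h1 h
      rw [Real.cos_abs, h4] at h6
      linarith
    rw [abs_lt] at h5
    refine ⟨x - 2*π*k, ⟨by rw [hs4]; linarith, by rw [ht4]; linarith⟩, ?_⟩
    have hz : ((2*π*(k:ℝ) : ℝ) : AddCircle (2*π)) = 0 := by
      rw [show (2*π*(k:ℝ) : ℝ) = ((k • (2*π) : ℝ)) by rw [zsmul_eq_mul]; ring,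
        AddCircle.coe_zsmul, AddCircle.coe_period, smul_zero]
    simp only
    rw [AddCircle.coe_sub, hz, sub_zero]
  · -- integral
    have hshift := (PMBump.f_periodic (a := a) (δ := δ) (m := m)).intervalIntegral_add_eq
      0 (m + 2*δ - 2*π)
    rw [zero_add, show m + 2*δ - 2*π + 2*π = m + 2*δ by ring] at hshift
    rw [hshift, PMBump.f_integral hδ hδ4]
    rw [hadef]
    have h1 : (1 - Real.cos δ) ≠ 0 := by linarith
    field_simp
    ring
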